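/- arXiv:2502.10997 — 2 statements merged into one kernel-verified Lean document; each statement's English description precedes it below -/
import Mathlib

section
/- Let n ≥ 1, ε > 0, and Δ > 0. Let X_1, …, X_n be i.i.d. random variables taking values in [0,1] with mean μ, and let Y_1, …, Y_n be i.i.d. random variables taking values in [0,1] with mean μ + Δ, all mutually independent. Set G = ∑_{i=1}^n X_i and G' = ∑_{i=1}^n Y_i. Then E[1/(exp(ε·(G' − G)) + 1)] ≤ exp(−ε·nΔ/2) + exp(−nΔ²/4). -/
open MeasureTheory ProbabilityTheory


private lemma hoeffding_core {m : ℝ} (hm0 : 0 ≤ m) (hm1 : m ≤ 1) (t : ℝ) :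
    1 - m + m * Real.exp t ≤ Real.exp (t * m + t ^ 2 / 8) := by
  set d : ℝ → ℝ := fun s => 1 - m + m * Real.exp s with hd_def
  have hdpos : ∀ s, 0 < d s := by
    intro s
    rcases lt_or_ge m 1 with h | h
    · have : 0 ≤ m * Real.exp s := mul_nonneg hm0 (Real.exp_pos s).le
      simp only [hd_def]; nlinarith
    · have hm : m = 1 := le_antisymm hm1 h
      simp only [hd_def, hm]; nlinarith [Real.exp_pos s]
  set g : ℝ → ℝ := fun s => Real.log (d s) - m * s - s ^ 2 / 8 with hg_def
  set g1 : ℝ → ℝ := fun s => m * Real.exp s / d s - m - s / 4 with hg1_def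
  have hd_deriv : ∀ s, HasDerivAt d (m * Real.exp s) s := by
    intro s
    exact ((Real.hasDerivAt_exp s).const_mul m).const_add (1 - m)
  have hg_deriv : ∀ s, HasDerivAt g (g1 s) s := by
    intro s
    have h1 : HasDerivAt (fun s => Real.log (d s)) (m * Real.exp s / d s) s :=
      (hd_deriv s).log (hdpos s).ne'
    have h2 : HasDerivAt (fun s : ℝ => m * s) m s := by
      simpa using (hasDerivAt_id s).const_mul m
    have h3 : HasDerivAt (fun s : ℝ => s ^ 2 / 8) (s / 4) s := by
      have := (hasDerivAt_pow 2 s).div_const 8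
      simpa using this.congr_deriv (by ring)
    exact (h1.sub h2).sub h3
  have hg1_deriv : ∀ s, HasDerivAt g1
      ((m * Real.exp s * d s - m * Real.exp s * (m * Real.exp s)) / d s ^ 2 - 1 / 4) s := by
    intro s
    have h1 : HasDerivAt (fun s => m * Real.exp s / d s)
        ((m * Real.exp s * d s - m * Real.exp s * (m * Real.exp s)) / d s ^ 2) s :=
      ((Real.hasDerivAt_exp s).const_mul m).div (hd_deriv s) (hdpos s).ne'
    have h2 : HasDerivAt (fun s : ℝ => m + s / 4) (1 / 4) s := by
      simpa using ((hasDerivAt_id s).div_const 4).const_add m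
    have := h1.sub h2
    refine this.congr_of_eventuallyEq ?_
    filter_upwards with x; simp [hg1_def]; ring
  have hg1_anti : Antitone g1 := by
    refine antitone_of_deriv_nonpos (fun s => (hg1_deriv s).differentiableAt) (fun s => ?_)
    rw [(hg1_deriv s).deriv]
    have hds := hdpos s
    have hexp := Real.exp_pos s
    have key : m * Real.exp s * d s - m * Real.exp s * (m * Real.exp s) ≤ d s ^ 2 / 4 := by
      simp only [hd_def]
      nlinarith [sq_nonneg (1 - m - m * Real.exp s), mul_nonneg hm0 hexp.le]
    have : (m * Real.exp s * d s - m * Real.exp s * (m * Real.exp s)) / d s ^ 2 ≤ 1 / 4 := by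
      rw [div_le_iff₀ (by positivity)]
      linarith
    linarith
  have hg10 : g1 0 = 0 := by simp [hg1_def, hd_def]
  have hgle : ∀ s, g s ≤ g 0 := by
    intro s
    rcases le_total s 0 with h | h
    · have hmono : MonotoneOn g (Set.Iic 0) := by
        refine monotoneOn_of_deriv_nonneg (convex_Iic 0)
          (fun x _ => ((hg_deriv x).continuousAt).continuousWithinAt)
          (fun x _ => ((hg_deriv x).differentiableAt).differentiableWithinAt) (fun x hx => ?_)
        rw [(hg_deriv x).deriv]
        rw [interior_Iic, Set.mem_Iio] at hx
        have := hg1_anti hx.le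
        rw [hg10] at this
        exact this
      exact hmono h Set.self_mem_Iic h
    · have hanti : AntitoneOn g (Set.Ici 0) := by
        refine antitoneOn_of_deriv_nonpos (convex_Ici 0)
          (fun x _ => ((hg_deriv x).continuousAt).continuousWithinAt)
          (fun x _ => ((hg_deriv x).differentiableAt).differentiableWithinAt) (fun x hx => ?_)
        rw [(hg_deriv x).deriv]
        rw [interior_Ici, Set.mem_Ioi] at hx
        have := hg1_anti hx.le
        rw [hg10] at this
        exact this
      exact hanti Set.self_mem_Ici h h
  have hg0 : g 0 = 0 := by simp [hg_def, hd_def]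
  have := hgle t
  rw [hg0] at this
  have hlog : Real.log (d t) ≤ m * t + t ^ 2 / 8 := by
    simp only [hg_def] at this; linarith
  calc d t ≤ Real.exp (m * t + t ^ 2 / 8) := by
        rw [← Real.exp_log (hdpos t)]; exact Real.exp_le_exp.mpr hlog
    _ = Real.exp (t * m + t ^ 2 / 8) := by ring_nf

private lemma integrable_exp_mul_of_Icc {Ω : Type*} [MeasurableSpace Ω] {μ : Measure Ω}
    [IsProbabilityMeasure μ] {Z : Ω → ℝ} (hZ : Measurable Z)
    (hr : ∀ ω, Z ω ∈ Set.Icc (0 : ℝ) 1) (t : ℝ) :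
    Integrable (fun ω => Real.exp (t * Z ω)) μ := by
  refine Integrable.mono' (integrable_const (Real.exp |t|))
    ((hZ.const_mul t).exp.aestronglyMeasurable) (ae_of_all _ fun ω => ?_)
  rw [Real.norm_eq_abs, Real.abs_exp]
  refine Real.exp_le_exp.mpr ?_
  calc t * Z ω ≤ |t * Z ω| := le_abs_self _
    _ = |t| * |Z ω| := abs_mul t (Z ω)
    _ ≤ |t| * 1 := by
        refine mul_le_mul_of_nonneg_left ?_ (abs_nonneg t)
        rw [abs_le]; exact ⟨by linarith [(hr ω).1], (hr ω).2⟩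
    _ = |t| := mul_one _

private lemma integrable_of_Icc {Ω : Type*} [MeasurableSpace Ω] {μ : Measure Ω}
    [IsProbabilityMeasure μ] {Z : Ω → ℝ} (hZ : Measurable Z)
    (hr : ∀ ω, Z ω ∈ Set.Icc (0 : ℝ) 1) : Integrable Z μ := by
  refine Integrable.mono' (integrable_const 1) hZ.aestronglyMeasurable (ae_of_all _ fun ω => ?_)
  rw [Real.norm_eq_abs, abs_le]
  exact ⟨by linarith [(hr ω).1], (hr ω).2⟩

private lemma mgf_le_of_Icc {Ω : Type*} [MeasurableSpace Ω] {μ : Measure Ω}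
    [IsProbabilityMeasure μ] {Z : Ω → ℝ} (hZ : Measurable Z)
    (hr : ∀ ω, Z ω ∈ Set.Icc (0 : ℝ) 1) {m : ℝ} (hm : ∫ ω, Z ω ∂μ = m) (t : ℝ) :
    mgf Z μ t ≤ Real.exp (t * m + t ^ 2 / 8) := by
  have hZint : Integrable Z μ := integrable_of_Icc hZ hr
  have hm0 : 0 ≤ m := by
    rw [← hm]; exact integral_nonneg fun ω => (hr ω).1
  have hm1 : m ≤ 1 := by
    rw [← hm]
    calc ∫ ω, Z ω ∂μ ≤ ∫ _, (1 : ℝ) ∂μ := integral_mono hZint (integrable_const 1)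
            fun ω => (hr ω).2
      _ = 1 := by simp
  have hpt : ∀ ω, Real.exp (t * Z ω) ≤ 1 - Z ω + Z ω * Real.exp t := by
    intro ω
    have h0 := (hr ω).1
    have h1 := (hr ω).2
    have := convexOn_exp.2 (Set.mem_univ (0 : ℝ)) (Set.mem_univ t)
      (by linarith : (0:ℝ) ≤ 1 - Z ω) h0 (by ring)
    simp only [smul_eq_mul, mul_zero, Real.exp_zero, mul_one] at this
    calc Real.exp (t * Z ω) = Real.exp ((1 - Z ω) * 0 + Z ω * t) := by ring_nf
      _ ≤ (1 - Z ω) * 1 + Z ω * Real.exp t := by simpa using this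
      _ = 1 - Z ω + Z ω * Real.exp t := by ring
  have hint : mgf Z μ t ≤ 1 - m + m * Real.exp t := by
    rw [mgf, ← hm]
    calc ∫ ω, Real.exp (t * Z ω) ∂μ ≤ ∫ ω, (1 - Z ω + Z ω * Real.exp t) ∂μ := by
          have hi1 : Integrable (fun ω => 1 - Z ω) μ := (integrable_const 1).sub hZint
          have hi2 : Integrable (fun ω => Z ω * Real.exp t) μ := hZint.mul_const _
          exact integral_mono (integrable_exp_mul_of_Icc hZ hr t) (hi1.add hi2) hpt
      _ = 1 - (∫ ω, Z ω ∂μ) + (∫ ω, Z ω ∂μ) * Real.exp t := by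
          have hi1 : Integrable (fun ω => 1 - Z ω) μ := (integrable_const 1).sub hZint
          have hi2 : Integrable (fun ω => Z ω * Real.exp t) μ := hZint.mul_const _
          rw [integral_add hi1 hi2, integral_sub (integrable_const 1) hZint,
            integral_mul_const]
          simp
  exact hint.trans (hoeffding_core hm0 hm1 t)

/-- Key estimate for the tail bound of report-noisy-max with Gumbel noise: the expected
softmax-type weight of a suboptimal action (accumulated loss `G' = ∑ Y i`, mean `n(μ+Δ)`)
against the optimal action (accumulated loss `G = ∑ X i`, mean `nμ`) satisfies
`E[1/(exp(ε(G'-G)) + 1)] ≤ exp(-εnΔ/2) + exp(-nΔ²/4)`. -/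
theorem expected_softmax_weight_le {Ω : Type*} [MeasurableSpace Ω] (μ : Measure Ω)
    [IsProbabilityMeasure μ] (n : ℕ) (hn : 1 ≤ n) (ε Δ m : ℝ) (hε : 0 < ε) (hΔ : 0 < Δ)
    (X Y : Fin n → Ω → ℝ)
    (hX : ∀ i, Measurable (X i)) (hY : ∀ i, Measurable (Y i))
    (hXrange : ∀ i ω, X i ω ∈ Set.Icc (0 : ℝ) 1)
    (hYrange : ∀ i ω, Y i ω ∈ Set.Icc (0 : ℝ) 1)
    (hXid : ∀ i j, Measure.map (X i) μ = Measure.map (X j) μ)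
    (hYid : ∀ i j, Measure.map (Y i) μ = Measure.map (Y j) μ)
    (hXmean : ∀ i, ∫ ω, X i ω ∂μ = m)
    (hYmean : ∀ i, ∫ ω, Y i ω ∂μ = m + Δ)
    (hIndep : iIndepFun (Sum.elim X Y) μ) :
    ∫ ω, 1 / (Real.exp (ε * ((∑ i, Y i ω) - ∑ i, X i ω)) + 1) ∂μ ≤
      Real.exp (-ε * n * Δ / 2) + Real.exp (-(n : ℝ) * Δ ^ 2 / 4) := by
  classical
  set W : Fin n ⊕ Fin n → Ω → ℝ := Sum.elim (fun j => -(X j)) Y with hW_def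
  have hWmeas : ∀ i, Measurable (W i) := by
    rintro (j | j)
    · exact (hX j).neg
    · exact hY j
  have hWindep : iIndepFun W μ := by
    have h := hIndep.comp (Sum.elim (fun _ => fun x : ℝ => -x) (fun _ => id))
      (by rintro (j | j); exacts [measurable_neg, measurable_id])
    have heq : (fun i => Sum.elim (fun _ => fun x : ℝ => -x) (fun _ => id) i ∘ Sum.elim X Y i)
        = W := by
      funext i; rcases i with j | j <;> rfl
    rwa [heq] at h
  -- the sum of W equals ∑ Y - ∑ X
  have hsum : ∀ ω, (∑ i, W i) ω = (∑ i, Y i ω) - ∑ i, X i ω := by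
    intro ω
    rw [Finset.sum_apply]
    rw [Fintype.sum_sum_type]
    simp only [hW_def, Sum.elim_inl, Sum.elim_inr, Pi.neg_apply, Finset.sum_neg_distrib]
    ring
  -- integrability of exp(t * W i)
  have hWint : ∀ (t : ℝ) (i), Integrable (fun ω => Real.exp (t * W i ω)) μ := by
    intro t i
    rcases i with j | j
    · have := integrable_exp_mul_of_Icc (μ := μ) (hX j) (hXrange j) (-t)
      simpa [hW_def, mul_neg, neg_mul] using this
    · exact integrable_exp_mul_of_Icc (hY j) (hYrange j) t
  -- mgf bounds
  have hmgf_inl : ∀ j : Fin n, mgf (W (Sum.inl j)) μ (-Δ) ≤ Real.exp (Δ * m + Δ ^ 2 / 8) := by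
    intro j
    have h1 : mgf (W (Sum.inl j)) μ (-Δ) = mgf (X j) μ Δ := by
      show mgf (-(X j)) μ (-Δ) = _
      rw [mgf_neg, neg_neg]
    rw [h1]
    exact mgf_le_of_Icc (hX j) (hXrange j) (hXmean j) Δ
  have hmgf_inr : ∀ j : Fin n, mgf (W (Sum.inr j)) μ (-Δ) ≤
      Real.exp (-Δ * (m + Δ) + Δ ^ 2 / 8) := fun j => by
    simpa [neg_sq, hW_def] using mgf_le_of_Icc (hY j) (hYrange j) (hYmean j) (-Δ)
  have hmgf_sum : mgf (∑ i, W i) μ (-Δ) ≤ Real.exp (-(3 / 4) * n * Δ ^ 2) := by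
    rw [hWindep.mgf_sum hWmeas]
    calc ∏ i, mgf (W i) μ (-Δ)
        = (∏ j : Fin n, mgf (W (Sum.inl j)) μ (-Δ)) *
          ∏ j : Fin n, mgf (W (Sum.inr j)) μ (-Δ) := by rw [Fintype.prod_sum_type]
      _ ≤ (∏ _j : Fin n, Real.exp (Δ * m + Δ ^ 2 / 8)) *
          ∏ _j : Fin n, Real.exp (-Δ * (m + Δ) + Δ ^ 2 / 8) := by
          refine mul_le_mul (Finset.prod_le_prod (fun j _ => mgf_nonneg) fun j _ => hmgf_inl j)
            (Finset.prod_le_prod (fun j _ => mgf_nonneg) fun j _ => hmgf_inr j)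
            (Finset.prod_nonneg fun j _ => mgf_nonneg)
            (Finset.prod_nonneg fun j _ => (Real.exp_pos _).le)
      _ = Real.exp (-(3 / 4) * n * Δ ^ 2) := by
          rw [Finset.prod_const, Finset.prod_const, Finset.card_univ, Fintype.card_fin,
            ← Real.exp_nat_mul, ← Real.exp_nat_mul, ← Real.exp_add]
          congr 1
          ring
  -- Chernoff bound
  have hChernoff : (μ {ω | (∑ i, W i) ω ≤ n * Δ / 2}).toReal ≤
      Real.exp (-(n : ℝ) * Δ ^ 2 / 4) := by
    have h := measure_le_le_exp_mul_mgf (μ := μ) (X := ∑ i, W i) (n * Δ / 2)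
      (neg_nonpos.mpr hΔ.le)
      (hWindep.integrable_exp_mul_sum hWmeas fun i _ => hWint (-Δ) i)
    refine h.trans ?_
    calc Real.exp (-(-Δ) * (n * Δ / 2)) * mgf (∑ i, W i) μ (-Δ)
        ≤ Real.exp (-(-Δ) * (n * Δ / 2)) * Real.exp (-(3 / 4) * n * Δ ^ 2) := by
          exact mul_le_mul_of_nonneg_left hmgf_sum (Real.exp_pos _).le
      _ = Real.exp (-(n : ℝ) * Δ ^ 2 / 4) := by
          rw [← Real.exp_add]; congr 1; ring
  -- the measurable set
  have hSmeas : Measurable fun ω => (∑ i, Y i ω) - ∑ i, X i ω :=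
    (Finset.measurable_sum _ fun i _ => hY i).sub (Finset.measurable_sum _ fun i _ => hX i)
  set A : Set Ω := {ω | (∑ i, Y i ω) - ∑ i, X i ω ≤ n * Δ / 2} with hA_def
  have hAmeas : MeasurableSet A := measurableSet_le hSmeas measurable_const
  have hAeq : A = {ω | (∑ i, W i) ω ≤ n * Δ / 2} := by
    ext ω; simp only [hA_def, Set.mem_setOf_eq, hsum ω]
  -- pointwise bound
  have hpt : ∀ ω, 1 / (Real.exp (ε * ((∑ i, Y i ω) - ∑ i, X i ω)) + 1) ≤
      Real.exp (-ε * n * Δ / 2) + A.indicator (fun _ => (1 : ℝ)) ω := by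
    intro ω
    set s := (∑ i, Y i ω) - ∑ i, X i ω with hs_def
    rcases le_or_gt s (n * Δ / 2) with h | h
    · have hmem : ω ∈ A := h
      rw [Set.indicator_of_mem hmem]
      have h1 : 1 / (Real.exp (ε * s) + 1) ≤ 1 := by
        rw [div_le_one (by positivity)]
        nlinarith [Real.exp_pos (ε * s)]
      nlinarith [Real.exp_pos (-ε * n * Δ / 2)]
    · have hmem : ω ∉ A := not_le.mpr h
      rw [Set.indicator_of_notMem hmem, add_zero]
      calc 1 / (Real.exp (ε * s) + 1) ≤ 1 / Real.exp (ε * s) := by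
            refine one_div_le_one_div_of_le (Real.exp_pos _) (by linarith)
        _ = Real.exp (-(ε * s)) := by rw [Real.exp_neg, one_div]
        _ ≤ Real.exp (-ε * n * Δ / 2) := by
            refine Real.exp_le_exp.mpr ?_
            have : (n : ℝ) * Δ / 2 ≤ s := h.le
            nlinarith
  -- integrate
  have hf_meas : Measurable fun ω => 1 / (Real.exp (ε * ((∑ i, Y i ω) - ∑ i, X i ω)) + 1) :=
    measurable_const.div ((hSmeas.const_mul ε).exp.add measurable_const)
  have hf_int : Integrable
      (fun ω => 1 / (Real.exp (ε * ((∑ i, Y i ω) - ∑ i, X i ω)) + 1)) μ := by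
    refine Integrable.mono' (integrable_const 1) hf_meas.aestronglyMeasurable
      (ae_of_all _ fun ω => ?_)
    rw [Real.norm_eq_abs, abs_of_nonneg (by positivity)]
    rw [div_le_one (by positivity)]
    nlinarith [Real.exp_pos (ε * ((∑ i, Y i ω) - ∑ i, X i ω))]
  have hg_int : Integrable
      (fun ω => Real.exp (-ε * n * Δ / 2) + A.indicator (fun _ => (1 : ℝ)) ω) μ :=
    (integrable_const _).add ((integrable_const 1).indicator hAmeas)
  calc ∫ ω, 1 / (Real.exp (ε * ((∑ i, Y i ω) - ∑ i, X i ω)) + 1) ∂μ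
      ≤ ∫ ω, (Real.exp (-ε * n * Δ / 2) + A.indicator (fun _ => (1 : ℝ)) ω) ∂μ :=
        integral_mono hf_int hg_int hpt
    _ = Real.exp (-ε * n * Δ / 2) + (μ A).toReal := by
        rw [integral_add (integrable_const _) ((integrable_const 1).indicator hAmeas),
          integral_const, integral_indicator_const _ hAmeas]
        simp
        rfl
    _ ≤ Real.exp (-ε * n * Δ / 2) + Real.exp (-(n : ℝ) * Δ ^ 2 / 4) := by
        rw [hAeq]
        exact add_le_add_right hChernoff _
end

section
/- For all real ε > 0 and every integer K > 5, ∑_{t=1}^{∞} (K−5)/(3·e^{tε} + K − 5) ≥ log(e^{ε} + (K−5)/3)/ε − 1 ≥ log((K−5)/3)/ε − 1. -/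
open Real Filter Finset

/-- Chord inequality for `exp`: convexity. -/
lemma exp_chord (w x : ℝ) (hw0 : 0 ≤ w) (hw1 : w ≤ 1) :
    Real.exp (w * x) ≤ w * Real.exp x + (1 - w) := by
  have h := convexOn_exp.2 (Set.mem_univ x) (Set.mem_univ (0 : ℝ)) hw0
    (by linarith : (0:ℝ) ≤ 1 - w) (by ring)
  simpa using h

/-- Key log inequality. -/
lemma key_log (a c x : ℝ) (ha : 0 < a) (hc : 0 < c) :
    x * (a / (a + c)) ≤ Real.log (a * Real.exp x + c) - Real.log (a + c) := by
  have hac : 0 < a + c := by linarith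
  have hw0 : 0 ≤ a / (a + c) := by positivity
  have hw1 : a / (a + c) ≤ 1 := by rw [div_le_one hac]; linarith
  have h1 := exp_chord (a / (a + c)) x hw0 hw1
  have h2 : a / (a + c) * Real.exp x + (1 - a / (a + c))
      = (a * Real.exp x + c) / (a + c) := by
    field_simp
    ring
  rw [h2] at h1
  have h3 : Real.log (Real.exp (a / (a + c) * x))
      ≤ Real.log ((a * Real.exp x + c) / (a + c)) :=
    Real.log_le_log (Real.exp_pos _) h1
  rw [Real.log_exp, Real.log_div (by positivity) (ne_of_gt hac)] at h3
  linarith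

/-- The `Ω((log K)/ε)` lower bound as the time horizon tends to infinity:
`∑_{t=1}^∞ (K-5)/(3e^{tε} + K - 5) ≥ log(e^ε + (K-5)/3)/ε - 1 ≥ log((K-5)/3)/ε - 1`. -/
theorem privacy_lower_bound_tsum (ε : ℝ) (hε : 0 < ε) (K : ℕ) (hK : 5 < K) :
    (∑' t : ℕ, ((K : ℝ) - 5) / (3 * Real.exp (((t : ℝ) + 1) * ε) + (K : ℝ) - 5)) ≥
        Real.log (Real.exp ε + ((K : ℝ) - 5) / 3) / ε - 1 ∧
      Real.log (Real.exp ε + ((K : ℝ) - 5) / 3) / ε - 1 ≥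
        Real.log (((K : ℝ) - 5) / 3) / ε - 1 := by
  have hK6 : (6 : ℝ) ≤ (K : ℝ) := by exact_mod_cast hK
  set c : ℝ := ((K : ℝ) - 5) / 3 with hc_def
  have hc : 0 < c := by
    have : (0:ℝ) < (K : ℝ) - 5 := by linarith
    positivity
  set f : ℕ → ℝ := fun n => c / (Real.exp (((n : ℝ) + 1) * ε) + c) with hf_def
  have hEpos : ∀ n : ℕ, (0:ℝ) < Real.exp (((n : ℝ) + 1) * ε) := fun n => Real.exp_pos _
  -- terms of the tsum equal f
  have hterm : ∀ n : ℕ, ((K : ℝ) - 5) / (3 * Real.exp (((n : ℝ) + 1) * ε) + (K : ℝ) - 5)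
      = f n := by
    intro n
    have hE := hEpos n
    have h1 : 3 * Real.exp (((n : ℝ) + 1) * ε) + (K : ℝ) - 5 > 0 := by linarith
    have h2 : Real.exp (((n : ℝ) + 1) * ε) + ((K : ℝ) - 5) / 3 > 0 := by
      have : (0:ℝ) < (K : ℝ) - 5 := by linarith
      positivity
    show _ = c / (Real.exp (((n : ℝ) + 1) * ε) + c)
    rw [hc_def, div_eq_div_iff (by linarith) (by linarith)]
    ring
  -- summability
  have hr0 : (0:ℝ) ≤ Real.exp (-ε) := (Real.exp_pos _).le
  have hr1 : Real.exp (-ε) < 1 := Real.exp_lt_one_iff.mpr (by linarith)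
  have hfle : ∀ n : ℕ, f n ≤ (c * Real.exp (-ε)) * (Real.exp (-ε)) ^ n := by
    intro n
    have hE := hEpos n
    have h1 : (c * Real.exp (-ε)) * (Real.exp (-ε)) ^ n
        = c / Real.exp (((n : ℝ) + 1) * ε) := by
      rw [← Real.exp_nat_mul, mul_assoc, ← Real.exp_add]
      have h2 : Real.exp (-ε + (n : ℝ) * -ε) = (Real.exp (((n : ℝ) + 1) * ε))⁻¹ := by
        rw [← Real.exp_neg]; congr 1; ring
      rw [h2, div_eq_mul_inv]
    rw [h1]
    show c / (Real.exp (((n : ℝ) + 1) * ε) + c) ≤ c / Real.exp (((n : ℝ) + 1) * ε)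
    gcongr
    · linarith
  have hsum : Summable f := by
    apply Summable.of_nonneg_of_le (fun n => by positivity) hfle
    exact (summable_geometric_of_lt_one hr0 hr1).mul_left _
  -- the telescoping comparison
  set g : ℕ → ℝ := fun m => Real.log (Real.exp ((m : ℝ) * ε) + c) / ε - (m : ℝ) with hg_def
  have hstep : ∀ n : ℕ, g (n + 1) - g (n + 2) ≤ f n := by
    intro n
    set a : ℝ := Real.exp (((n : ℝ) + 1) * ε) with ha_def
    have haE : 0 < a := Real.exp_pos _
    have hkey := key_log a c ε haE hc
    have hax : a * Real.exp ε = Real.exp (((n : ℝ) + 2) * ε) := by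
      rw [ha_def, ← Real.exp_add]; ring_nf
    rw [hax] at hkey
    have hsum1 : a / (a + c) + c / (a + c) = 1 := by field_simp
    have hdiv : a / (a + c)
        ≤ (Real.log (Real.exp (((n : ℝ) + 2) * ε) + c) - Real.log (a + c)) / ε := by
      rw [le_div_iff₀ hε]; linarith [hkey]
    have hcast1 : ((n + 1 : ℕ) : ℝ) = (n : ℝ) + 1 := by push_cast; ring
    have hcast2 : ((n + 2 : ℕ) : ℝ) = (n : ℝ) + 2 := by push_cast; ring
    have hg1 : g (n + 1) = Real.log (a + c) / ε - ((n : ℝ) + 1) := by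
      simp only [hg_def, hcast1, ha_def]
    have hg2 : g (n + 2) = Real.log (Real.exp (((n : ℝ) + 2) * ε) + c) / ε
        - ((n : ℝ) + 2) := by
      simp only [hg_def, hcast2]
    have hfn : f n = c / (a + c) := rfl
    rw [hg1, hg2, hfn]
    have hsplit : (Real.log (Real.exp (((n : ℝ) + 2) * ε) + c) - Real.log (a + c)) / ε
        = Real.log (Real.exp (((n : ℝ) + 2) * ε) + c) / ε - Real.log (a + c) / ε :=
      sub_div _ _ _
    linarith [hdiv, hsum1]
  -- partial sums bound
  have hpartial : ∀ N : ℕ, g 1 - g (N + 1) ≤ ∑ n ∈ Finset.range N, f n := by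
    intro N
    have htel : ∑ n ∈ Finset.range N, (g (n + 1) - g (n + 2))
        = g 1 - g (N + 1) :=
      Finset.sum_range_sub' (fun i => g (i + 1)) N
    calc g 1 - g (N + 1) = ∑ n ∈ Finset.range N, (g (n + 1) - g (n + 2)) := htel.symm
      _ ≤ ∑ n ∈ Finset.range N, f n := Finset.sum_le_sum (fun n _ => hstep n)
  have hfnonneg : ∀ n : ℕ, 0 ≤ f n := fun n => by positivity
  have hsumle : ∀ N : ℕ, ∑ n ∈ Finset.range N, f n ≤ ∑' n, f n :=
    fun N => Summable.sum_le_tsum _ (fun n _ => hfnonneg n) hsum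
  -- bound g (N+1)
  have hgbound : ∀ N : ℕ, g (N + 1) ≤ (c / ε) * Real.exp (-ε) * (Real.exp (-ε)) ^ N := by
    intro N
    have hE : (0:ℝ) < Real.exp (((N : ℝ) + 1) * ε) := Real.exp_pos _
    have hlog : Real.log (Real.exp (((N : ℝ) + 1) * ε) + c)
        ≤ ((N : ℝ) + 1) * ε + c / Real.exp (((N : ℝ) + 1) * ε) := by
      have h1 : Real.log ((Real.exp (((N : ℝ) + 1) * ε) + c) / Real.exp (((N : ℝ) + 1) * ε))
          ≤ (Real.exp (((N : ℝ) + 1) * ε) + c) / Real.exp (((N : ℝ) + 1) * ε) - 1 :=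
        Real.log_le_sub_one_of_pos (by positivity)
      rw [Real.log_div (by positivity) (ne_of_gt hE), Real.log_exp] at h1
      have h2 : (Real.exp (((N : ℝ) + 1) * ε) + c) / Real.exp (((N : ℝ) + 1) * ε)
          = 1 + c / Real.exp (((N : ℝ) + 1) * ε) := by field_simp
      rw [h2] at h1
      linarith
    have hcastN : ((N + 1 : ℕ) : ℝ) = (N : ℝ) + 1 := by push_cast; ring
    have hgN : g (N + 1) = Real.log (Real.exp (((N : ℝ) + 1) * ε) + c) / ε - ((N : ℝ) + 1) := by
      simp only [hg_def, hcastN]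
    have heq : (c / ε) * Real.exp (-ε) * (Real.exp (-ε)) ^ N
        = (c / Real.exp (((N : ℝ) + 1) * ε)) / ε := by
      rw [← Real.exp_nat_mul, mul_assoc, ← Real.exp_add]
      have h2 : Real.exp (-ε + (N : ℝ) * -ε) = (Real.exp (((N : ℝ) + 1) * ε))⁻¹ := by
        rw [← Real.exp_neg]; congr 1; ring
      rw [h2]; ring
    rw [hgN, heq]
    rw [sub_le_iff_le_add, div_le_iff₀ hε]
    have hcancel : c / Real.exp (((N : ℝ) + 1) * ε) / ε * ε
        = c / Real.exp (((N : ℝ) + 1) * ε) := div_mul_cancel₀ _ (ne_of_gt hε)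
    nlinarith [hlog, hcancel]
  -- conclude via limit
  have htends : Tendsto (fun N : ℕ => (c / ε) * Real.exp (-ε) * (Real.exp (-ε)) ^ N)
      atTop (nhds 0) := by
    have := (tendsto_pow_atTop_nhds_zero_of_lt_one hr0 hr1).const_mul ((c / ε) * Real.exp (-ε))
    simpa using this
  have hmain : g 1 ≤ ∑' n, f n := by
    have hb : ∀ N : ℕ, g 1 - ∑' n, f n ≤ (c / ε) * Real.exp (-ε) * (Real.exp (-ε)) ^ N := by
      intro N
      have h1 := hpartial N
      have h2 := hsumle N
      have h3 := hgbound N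
      calc g 1 - ∑' n, f n ≤ g 1 - ∑ n ∈ Finset.range N, f n := by linarith
        _ ≤ g (N + 1) := by linarith
        _ ≤ _ := h3
    have := ge_of_tendsto' htends hb
    linarith
  have hg1 : g 1 = Real.log (Real.exp ε + c) / ε - 1 := by
    rw [hg_def]; norm_num
  constructor
  · rw [ge_iff_le, ← hg1]
    calc g 1 ≤ ∑' n, f n := hmain
      _ = _ := by exact tsum_congr (fun n => (hterm n).symm)
  · rw [ge_iff_le]
    have hlog : Real.log c ≤ Real.log (Real.exp ε + c) :=
      Real.log_le_log hc (by linarith [Real.exp_pos ε])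
    linarith [(div_le_div_iff_of_pos_right hε).mpr hlog]
end
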